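/- Let G be a group and H ⊆ G a subset closed under conjugation. The conjugation quandle on H is n-locally reductive if and only if H is an n-Engel subset of G (i.e., [b,_n a] = 1 for all a, b ∈ H). -/
import Mathlib


/-- The iterated Engel commutator: `engel b a 0 = a` and
`engel b a (k+1) = [b, engel b a k]`, where `[x, y] = x⁻¹ * y⁻¹ * x * y`. -/
def engel {G : Type*} [Group G] (b a : G) : ℕ → G
  | 0 => a
  | k + 1 => b⁻¹ * (engel b a k)⁻¹ * b * (engel b a k)

lemma iterate_conj_eq_mul_engel {G : Type*} [Group G] (a b : G) (k : ℕ) :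
    (fun x : G => x⁻¹ * b * x)^[k + 1] a = b * engel b a (k + 1) := by
  induction k with
  | zero => simp [engel]; group
  | succ k ih =>
      rw [Function.iterate_succ_apply' (fun x : G => x⁻¹ * b * x) (k + 1) a, ih]
      show (b * engel b a (k + 1))⁻¹ * b * (b * engel b a (k + 1)) = b * engel b a (k + 2)
      simp only [engel]
      group

/-- Let `G` be a group and `H ⊆ G` a subset closed under conjugation. The conjugation
quandle on `H` (with `g ▷ h = g⁻¹ * h * g`) is `n`-locally reductive if and only if `H`
is an `n`-Engel subset of `G`, i.e. `[b,_n a] = 1` for all `a, b ∈ H`. -/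
theorem conjSet_locally_reductive_iff_engel_subset {G : Type*} [Group G]
    (H : Set G) (hH : ∀ g : G, ∀ h ∈ H, g⁻¹ * h * g ∈ H) (n : ℕ) (hn : 1 ≤ n) :
    (∀ a ∈ H, ∀ b ∈ H, (fun x : G => x⁻¹ * b * x)^[n] a = b) ↔
      (∀ a ∈ H, ∀ b ∈ H, engel b a n = 1) := by
  obtain ⟨k, rfl⟩ : ∃ k, n = k + 1 := ⟨n - 1, (Nat.succ_pred_eq_of_pos hn).symm⟩
  constructor
  · intro h a ha b hb
    have := h a ha b hb
    rw [iterate_conj_eq_mul_engel] at this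
    exact mul_left_cancel (a := b) (by simpa using this)
  · intro h a ha b hb
    rw [iterate_conj_eq_mul_engel, h a ha b hb, mul_one]
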